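/- Let l ≥ 4 be an integer, let G ∈ 𝒢_l and let C be an odd hole of G. If P is a jump over C that is not a local jump over C, then the induced subgraph G[V(C ∪ P)] contains a short jump over C. -/

import Mathlib

open SimpleGraph

variable {V : Type*}

/-- The set of internal vertices of a walk from `x` to `y`. -/
def wInterior {G : SimpleGraph V} {x y : V} (P : G.Walk x y) : Set V :=
  {a | a ∈ P.support ∧ a ≠ x ∧ a ≠ y}

/-- `P` is an induced path of `G`. -/
def IsInducedPath (G : SimpleGraph V) {x y : V} (P : G.Walk x y) : Prop :=
  P.IsPath ∧ ∀ a ∈ P.support, ∀ b ∈ P.support, G.Adj a b → s(a, b) ∈ P.edges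

/-- A hole of `G`: an induced cycle of length at least 4. -/
def IsHole (G : SimpleGraph V) {v : V} (w : G.Walk v v) : Prop :=
  w.IsCycle ∧ 4 ≤ w.length ∧
    ∀ a ∈ w.support, ∀ b ∈ w.support, G.Adj a b → s(a, b) ∈ w.edges

/-- An odd hole of `G`. -/
def IsOddHole (G : SimpleGraph V) {v : V} (w : G.Walk v v) : Prop :=
  IsHole G w ∧ Odd w.length

/-- `G` belongs to the family `𝒢ₗ`: it has girth `2l+1` and
no odd hole of length at least `2l+3`. -/
def MemGFam (G : SimpleGraph V) (l : ℕ) : Prop :=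
  G.girth = (2 * l + 1 : ℕ) ∧
    ∀ (v : V) (w : G.Walk v v), IsOddHole G w → w.length < 2 * l + 3

/-- `G` is `k`-vertex-critical. -/
def IsVertexCritical (G : SimpleGraph V) (k : ℕ) : Prop :=
  G.chromaticNumber = k ∧
    ∀ v : V, (G.induce {u | u ≠ v}).chromaticNumber < k

/-- `S` is a vertex cut of `G`: deleting `S` leaves a disconnected graph. -/
def IsVertexCut (G : SimpleGraph V) (S : Set V) : Prop :=
  ¬ (G.induce Sᶜ).Preconnected

/-- `G` has a `K2`-cut. -/
def HasK2Cut (G : SimpleGraph V) : Prop :=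
  ∃ u v : V, G.Adj u v ∧ IsVertexCut G {u, v}

/-- `G` has a `P3`-cut. -/
def HasP3Cut (G : SimpleGraph V) : Prop :=
  ∃ u v w : V, u ≠ w ∧ G.Adj u v ∧ G.Adj v w ∧ ¬ G.Adj u w ∧ IsVertexCut G {u, v, w}

/-- `G` has a 2-edge-cut: two edges whose removal disconnects the graph. -/
def Has2EdgeCut (G : SimpleGraph V) : Prop :=
  ∃ e f : Sym2 V, e ≠ f ∧ e ∈ G.edgeSet ∧ f ∈ G.edgeSet ∧
    ¬ (G.deleteEdges {e, f}).Preconnected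

/-- `Q1`, `Q2` are the two internally disjoint `(x,y)`-paths of the cycle `w`. -/
def ArcsOf (G : SimpleGraph V) {v x y : V} (w : G.Walk v v) (Q1 Q2 : G.Walk x y) : Prop :=
  x ∈ w.support ∧ y ∈ w.support ∧ x ≠ y ∧ Q1.IsPath ∧ Q2.IsPath ∧
    ({a | a ∈ Q1.support} ∩ {a | a ∈ Q2.support} = {x, y}) ∧
    ({e | e ∈ w.edges} = {e | e ∈ Q1.edges} ∪ {e | e ∈ Q2.edges})

/-- `P` is a chordal path of the hole `w`: `w ∪ P` is an induced theta-subgraph of `G`. -/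
def IsChordalPath (G : SimpleGraph V) {v x y : V} (w : G.Walk v v) (P : G.Walk x y) : Prop :=
  IsHole G w ∧ P.IsPath ∧ 2 ≤ P.length ∧ x ∈ w.support ∧ y ∈ w.support ∧ x ≠ y ∧
    (∀ a ∈ wInterior P, a ∉ w.support) ∧
    (∀ a, (a ∈ w.support ∨ a ∈ P.support) → ∀ b, (b ∈ w.support ∨ b ∈ P.support) →
      G.Adj a b → (s(a, b) ∈ w.edges ∨ s(a, b) ∈ P.edges))

/-- `P` is an `(s,t)`-jump over the hole `w`. -/
def IsJump (G : SimpleGraph V) {v s t : V} (w : G.Walk v v) (P : G.Walk s t) : Prop :=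
  IsHole G w ∧ s ∈ w.support ∧ t ∈ w.support ∧ s ≠ t ∧ ¬ G.Adj s t ∧
    IsInducedPath G P ∧ ∀ a ∈ wInterior P, a ∉ w.support

/-- `P` is a local jump over `w` across the interior of the arc `Q1`
(`Q1`, `Q2` being the two arcs of `w` between the ends of `P`). -/
def IsLocalJumpAcross (G : SimpleGraph V) {v s t : V} (w : G.Walk v v)
    (P Q1 Q2 : G.Walk s t) : Prop :=
  IsJump G w P ∧ ArcsOf G w Q1 Q2 ∧
    (∃ a ∈ wInterior Q1, ∃ b ∈ wInterior P, G.Adj a b) ∧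
    (∀ a ∈ wInterior Q2, ∀ b ∈ wInterior P, ¬ G.Adj a b)

/-- `P` is a local jump over `w`. -/
def IsLocalJump (G : SimpleGraph V) {v s t : V} (w : G.Walk v v) (P : G.Walk s t) : Prop :=
  ∃ Q1 Q2 : G.Walk s t, IsLocalJumpAcross G w P Q1 Q2

/-- `P` is a local jump over `w` across one vertex. -/
def IsLocalJumpAcrossOne (G : SimpleGraph V) {v s t : V} (w : G.Walk v v)
    (P : G.Walk s t) : Prop :=
  ∃ Q1 Q2 : G.Walk s t, IsLocalJumpAcross G w P Q1 Q2 ∧ Q1.length = 2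

/-- `P` is a short jump over `w`: no internal vertex of either arc of `w`
has a neighbour among the internal vertices of `P`. -/
def IsShortJump (G : SimpleGraph V) {v s t : V} (w : G.Walk v v) (P : G.Walk s t) : Prop :=
  IsJump G w P ∧
    ∀ a ∈ w.support, a ≠ s → a ≠ t → ∀ b ∈ wInterior P, ¬ G.Adj a b

/-- `P` is a short jump over `w` across the interior of `Q1`, i.e. `P ∪ Q1` is an
odd hole (a jump hole over `w`). -/
def IsShortJumpAcross (G : SimpleGraph V) {v s t : V} (w : G.Walk v v)
    (P Q1 Q2 : G.Walk s t) : Prop :=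
  IsShortJump G w P ∧ ArcsOf G w Q1 Q2 ∧ IsOddHole G (P.append Q1.reverse)

/-- `x` lies in some jump hole over `w`. -/
def InJumpHoleOver (G : SimpleGraph V) {v : V} (w : G.Walk v v) (x : V) : Prop :=
  ∃ (s t : V) (P Q1 Q2 : G.Walk s t),
    IsShortJumpAcross G w P Q1 Q2 ∧ (x ∈ P.support ∨ x ∈ Q1.support)

/-- `a`, `b`, `c`, `d` appear on the cycle `w` in this cyclic order. -/
def CyclicOrder4 (G : SimpleGraph V) {v : V} (w : G.Walk v v) (a b c d : V) : Prop :=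
  ∃ n : ℕ, List.Sublist [a, b, c, d] (w.support.tail.rotate n)

/-- A `K4`-subdivision in `G`: four distinct branch vertices joined by six
internally disjoint paths (the arrises). -/
structure K4Sub (G : SimpleGraph V) where
  u1 : V
  u2 : V
  u3 : V
  u4 : V
  P1 : G.Walk u1 u2
  P2 : G.Walk u3 u4
  Q1 : G.Walk u2 u3
  Q2 : G.Walk u1 u4
  L1 : G.Walk u1 u3
  L2 : G.Walk u2 u4
  hu : List.Nodup [u1, u2, u3, u4]
  hP1 : P1.IsPath
  hP2 : P2.IsPath
  hQ1 : Q1.IsPath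
  hQ2 : Q2.IsPath
  hL1 : L1.IsPath
  hL2 : L2.IsPath
  hP : ∀ a ∈ P1.support, a ∉ P2.support
  hQ : ∀ a ∈ Q1.support, a ∉ Q2.support
  hL : ∀ a ∈ L1.support, a ∉ L2.support

namespace K4Sub

variable {G : SimpleGraph V}

/-- The face cycle `C1 = P1 ∪ Q1 ∪ L1`. -/
def C1 (H : K4Sub G) : G.Walk H.u1 H.u1 := (H.P1.append H.Q1).append H.L1.reverse
/-- The face cycle `C2 = P1 ∪ Q2 ∪ L2`. -/
def C2 (H : K4Sub G) : G.Walk H.u1 H.u1 := (H.P1.append H.L2).append H.Q2.reverse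
/-- The face cycle `C3 = P2 ∪ Q1 ∪ L2`. -/
def C3 (H : K4Sub G) : G.Walk H.u2 H.u2 := (H.Q1.append H.P2).append H.L2.reverse
/-- The face cycle `C4 = C1 △ C2 △ C3 = P2 ∪ Q2 ∪ L1`. -/
def C4 (H : K4Sub G) : G.Walk H.u1 H.u1 := (H.L1.append H.P2).append H.Q2.reverse

/-- The vertex set of the subdivision. -/
def verts (H : K4Sub G) : Set V :=
  {a | a ∈ H.P1.support ∨ a ∈ H.P2.support ∨ a ∈ H.Q1.support ∨
       a ∈ H.Q2.support ∨ a ∈ H.L1.support ∨ a ∈ H.L2.support}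

/-- The edge set of the subdivision. -/
def edges (H : K4Sub G) : Set (Sym2 V) :=
  {e | e ∈ H.P1.edges ∨ e ∈ H.P2.edges ∨ e ∈ H.Q1.edges ∨
       e ∈ H.Q2.edges ∨ e ∈ H.L1.edges ∨ e ∈ H.L2.edges}

end K4Sub

/-- `H` is an odd `K4`-subdivision: all four face cycles are odd holes. -/
def IsOddK4 (G : SimpleGraph V) (H : K4Sub G) : Prop :=
  IsOddHole G H.C1 ∧ IsOddHole G H.C2 ∧ IsOddHole G H.C3 ∧ IsOddHole G H.C4

/-- `G` has an odd `K4`-subdivision. -/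
def HasOddK4 (G : SimpleGraph V) : Prop := ∃ H : K4Sub G, IsOddK4 G H

/-- `H` is a balanced `K4`-subdivision of type `(1,2)`. -/
def IsBalancedK4 (G : SimpleGraph V) (H : K4Sub G) : Prop :=
  IsOddHole G H.C1 ∧ IsOddHole G H.C2 ∧
    IsHole G H.C3 ∧ Even H.C3.length ∧ IsHole G H.C4 ∧ Even H.C4.length ∧
    H.Q1.length = 1 ∧ 2 ≤ H.L2.length

/-- `G` contains a balanced `K4`-subdivision of type `(1,2)`. -/
def HasBalancedK4 (G : SimpleGraph V) : Prop := ∃ H : K4Sub G, IsBalancedK4 G H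

/-- `P` is a direct connection linking the (vertex sets of) two disjoint induced
subgraphs `S1` and `S2`. -/
def IsDirectConnection (G : SimpleGraph V) (S1 S2 : Set V) {v1 v2 : V}
    (P : G.Walk v1 v2) : Prop :=
  IsInducedPath G P ∧ (∀ x ∈ P.support, x ∉ S1 ∧ x ∉ S2) ∧
    (∃ y ∈ S1, G.Adj v1 y) ∧ (∃ y ∈ S2, G.Adj v2 y) ∧
    (∀ x ∈ P.support, (∃ y ∈ S1, G.Adj x y) → x = v1) ∧
    (∀ x ∈ P.support, (∃ y ∈ S2, G.Adj x y) → x = v2)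

/-- `P` is a minimal direct connection linking `S1` and `S2`. -/
def IsMinimalDirectConnection (G : SimpleGraph V) (S1 S2 : Set V) {v1 v2 : V}
    (P : G.Walk v1 v2) : Prop :=
  IsDirectConnection G S1 S2 P ∧
    ∀ (w1 w2 : V) (P' : G.Walk w1 w2), IsDirectConnection G S1 S2 P' →
      (∀ x ∈ P'.support, x ∈ P.support) → ∀ x ∈ P.support, x ∈ P'.support

section Aux

open SimpleGraph Walk

variable {G : SimpleGraph V}

/-- In a non-nil closed walk, every support vertex is in the support tail. -/
lemma aux_mem_tail_of_closed {v z : V} (w : G.Walk v v) (hnil : w ≠ Walk.nil)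
    (hz : z ∈ w.support) : z ∈ w.support.tail := by
  cases w with
  | nil => exact absurd rfl hnil
  | cons h q =>
    rw [Walk.support_cons] at hz ⊢
    rcases List.mem_cons.1 hz with rfl | hz
    · exact q.end_mem_support
    · exact hz

/-- In a path starting with edge `h₀ : s ~ p₁`, any edge at `s` goes to `p₁`. -/
lemma aux_edge_head {s p₁ t : V} (h₀ : G.Adj s p₁) (P₁ : G.Walk p₁ t)
    (hP : (Walk.cons h₀ P₁).IsPath) {z : V}
    (he : s(s, z) ∈ (Walk.cons h₀ P₁).edges) : z = p₁ := by
  rw [Walk.edges_cons, List.mem_cons] at he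
  rcases he with he | he
  · rw [Sym2.eq_iff] at he
    rcases he with ⟨-, rfl⟩ | ⟨h1, h2⟩
    · rfl
    · exact absurd h1 h₀.ne
  · exfalso
    have hs : s ∈ P₁.support := P₁.fst_mem_support_of_mem_edges he
    have := hP.support_nodup
    rw [Walk.support_cons, List.nodup_cons] at this
    exact this.1 hs

/-- If `s(b,t)` is an edge of the path `P` and `R` is the suffix of `P` from `b`,
then `R` has length 1. -/
lemma aux_suffix_len_one {s t b : V} (P : G.Walk s t) (hP : P.IsPath)
    (Pre : G.Walk s b) (R : G.Walk b t) (hdec : P = Pre.append R)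
    (he : s(b, t) ∈ P.edges) (hbt : b ≠ t) : R.length = 1 := by
  subst hdec
  have hR : R.IsPath := hP.of_append_right
  rw [Walk.edges_append, List.mem_append] at he
  rcases he with he | he
  · exfalso
    have ht1 : t ∈ Pre.support := Pre.snd_mem_support_of_mem_edges he
    have ht2 : t ∈ R.support.tail := by
      have : t ∈ R.support := R.end_mem_support
      rw [Walk.support_eq_cons R, List.mem_cons] at this
      rcases this with h | h
      · exact absurd h.symm hbt
      · exact h
    have hnd := hP.support_nodup
    rw [Walk.support_append] at hnd
    exact (List.disjoint_of_nodup_append hnd) ht1 ht2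
  · cases R with
    | nil => simp at he
    | cons h' R'' =>
      rename_i y
      rw [Walk.edges_cons, List.mem_cons] at he
      rcases he with he | he
      · rw [Sym2.eq_iff] at he
        rcases he with ⟨-, rfl⟩ | ⟨h1, h2⟩
        · have : R''.IsPath := hR.of_cons
          rw [isPath_iff_eq_nil] at this
          subst this
          rfl
        · exact absurd h2.symm hbt
      · exfalso
        have hb : b ∈ R''.support := R''.fst_mem_support_of_mem_edges he
        have := hR.support_nodup
        rw [Walk.support_cons, List.nodup_cons] at this
        exact this.1 hb

/-- An edge of a path `P` with both endpoints in a middle segment `B`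
is an edge of `B`. -/
lemma aux_middle_edge {s t b x : V} (P : G.Walk s t) (hP : P.IsPath)
    (A : G.Walk s b) (B : G.Walk b x) (C : G.Walk x t)
    (hdec : P = A.append (B.append C))
    {u z : V} (huz : G.Adj u z) (hu : u ∈ B.support) (hz : z ∈ B.support)
    (he : s(u, z) ∈ P.edges) : s(u, z) ∈ B.edges := by
  subst hdec
  have hnd := hP.support_nodup
  rw [Walk.support_append, Walk.tail_support_append] at hnd
  have hdisj := List.disjoint_of_nodup_append hnd
  have hndr : (B.support.tail ++ C.support.tail).Nodup := (List.nodup_append.1 hnd).2.1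
  have hdisj2 := List.disjoint_of_nodup_append hndr
  rw [Walk.edges_append, Walk.edges_append, List.mem_append, List.mem_append] at he
  rcases he with he | he | he
  · exfalso
    have hu' : u ∈ A.support := A.fst_mem_support_of_mem_edges he
    have hz' : z ∈ A.support := A.snd_mem_support_of_mem_edges he
    have hub : u = b := by
      rw [Walk.support_eq_cons B, List.mem_cons] at hu
      rcases hu with rfl | hu
      · rfl
      · exact absurd (List.mem_append_left _ hu) (hdisj hu')
    have hzb : z = b := by
      rw [Walk.support_eq_cons B, List.mem_cons] at hz
      rcases hz with rfl | hz
      · rfl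
      · exact absurd (List.mem_append_left _ hz) (hdisj hz')
    exact huz.ne (hub.trans hzb.symm)
  · exact he
  · exfalso
    have hu' : u ∈ C.support := C.fst_mem_support_of_mem_edges he
    have hz' : z ∈ C.support := C.snd_mem_support_of_mem_edges he
    have hux : u = x := by
      rw [Walk.support_eq_cons C, List.mem_cons] at hu'
      rcases hu' with rfl | hu'
      · rfl
      · exfalso
        rw [Walk.support_eq_cons B, List.mem_cons] at hu
        rcases hu with rfl | hu
        · exact hdisj A.end_mem_support (List.mem_append_right _ hu')
        · exact hdisj2 hu hu'
    have hzx : z = x := by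
      rw [Walk.support_eq_cons C, List.mem_cons] at hz'
      rcases hz' with rfl | hz'
      · rfl
      · exfalso
        rw [Walk.support_eq_cons B, List.mem_cons] at hz
        rcases hz with rfl | hz
        · exact hdisj A.end_mem_support (List.mem_append_right _ hz')
        · exact hdisj2 hz hz'
    exact huz.ne (hux.trans hzx.symm)

/-- The two arcs of a cycle between two of its vertices. -/
lemma aux_arcs_exist [DecidableEq V] {v x y : V} (w : G.Walk v v) (hw : w.IsCycle)
    (hx : x ∈ w.support) (hy : y ∈ w.support) (hxy : x ≠ y) :
    ∃ (Q1 Q2 : G.Walk x y), ArcsOf G w Q1 Q2 ∧ Q1.length + Q2.length = w.length ∧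
      (∀ z ∈ Q1.support, z ∈ w.support) ∧ (∀ z ∈ Q2.support, z ∈ w.support) ∧
      (∀ z ∈ w.support, z ∈ Q1.support ∨ z ∈ Q2.support) := by
  have hnil : w ≠ Walk.nil := hw.ne_nil
  set T : G.Walk x x := w.rotate x hx with hT
  have hTc : T.IsCycle := hw.rotate hx
  have hTnil : T ≠ Walk.nil := hTc.ne_nil
  have hperm := w.support_rotate x hx
  have hpermE := w.rotate_edges x hx
  have hmem : ∀ z : V, z ∈ T.support ↔ z ∈ w.support := by
    intro z
    constructor
    · intro hzT
      exact List.mem_of_mem_tail (hperm.mem_iff.1 (aux_mem_tail_of_closed T hTnil hzT))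
    · intro hzw
      exact List.mem_of_mem_tail (hperm.mem_iff.2 (aux_mem_tail_of_closed w hnil hzw))
  have hyT : y ∈ T.support := (hmem y).2 hy
  set A : G.Walk x y := T.takeUntil y hyT with hA'
  set B : G.Walk y x := T.dropUntil y hyT with hB'
  have hspec : A.append B = T := T.take_spec hyT
  have hnd : T.support.tail.Nodup := ((Walk.isCycle_def T).1 hTc).2.2
  have htail : T.support.tail = A.support.tail ++ B.support.tail := by
    rw [← hspec, Walk.tail_support_append]
  have hndAB : (A.support.tail ++ B.support.tail).Nodup := htail ▸ hnd
  have hdisj := List.disjoint_of_nodup_append hndAB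
  have hxBt : x ∈ B.support.tail := by
    have hxB : x ∈ B.support := B.end_mem_support
    rw [Walk.support_eq_cons B, List.mem_cons] at hxB
    rcases hxB with h | h
    · exact absurd h hxy
    · exact h
  have hyAt : y ∈ A.support.tail := by
    have hyA : y ∈ A.support := A.end_mem_support
    rw [Walk.support_eq_cons A, List.mem_cons] at hyA
    rcases hyA with h | h
    · exact absurd h.symm hxy
    · exact h
  have hxA : x ∉ A.support.tail := fun h => hdisj h hxBt
  have hyB : y ∉ B.support.tail := fun h => hdisj hyAt h
  have hApath : A.IsPath := by
    rw [Walk.isPath_def, Walk.support_eq_cons A]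
    exact List.nodup_cons.2 ⟨hxA, (List.nodup_append.1 hndAB).1⟩
  have hBpath : B.IsPath := by
    rw [Walk.isPath_def, Walk.support_eq_cons B]
    exact List.nodup_cons.2 ⟨hyB, (List.nodup_append.1 hndAB).2.1⟩
  have hinter : ({a | a ∈ A.support} ∩ {a | a ∈ B.reverse.support} : Set V) = {x, y} := by
    ext z
    simp only [Set.mem_inter_iff, Set.mem_setOf_eq, Walk.support_reverse, List.mem_reverse,
      Set.mem_insert_iff, Set.mem_singleton_iff]
    constructor
    · rintro ⟨h1, h2⟩
      rw [Walk.support_eq_cons A, List.mem_cons] at h1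
      rw [Walk.support_eq_cons B, List.mem_cons] at h2
      rcases h1 with rfl | h1
      · exact Or.inl rfl
      · rcases h2 with rfl | h2
        · exact Or.inr rfl
        · exact absurd h2 (hdisj h1)
    · rintro (rfl | rfl)
      · exact ⟨A.start_mem_support, B.end_mem_support⟩
      · exact ⟨A.end_mem_support, B.start_mem_support⟩
  have hedges : ({e | e ∈ w.edges} : Set (Sym2 V)) =
      {e | e ∈ A.edges} ∪ {e | e ∈ B.reverse.edges} := by
    ext e
    simp only [Set.mem_setOf_eq, Set.mem_union, Walk.edges_reverse, List.mem_reverse]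
    rw [← hpermE.mem_iff, ← hT, ← hspec, Walk.edges_append, List.mem_append]
  have hlen : A.length + B.reverse.length = w.length := by
    rw [Walk.length_reverse]
    have h1 : A.length + B.length = T.length := by rw [← Walk.length_append, hspec]
    have h2 : T.length = w.length := by
      rw [hT]
      show ((w.dropUntil x hx).append (w.takeUntil x hx)).length = w.length
      rw [Walk.length_append]
      have := congrArg Walk.length (w.take_spec hx)
      rw [Walk.length_append] at this
      omega
    omega
  have hsubA : ∀ z ∈ A.support, z ∈ w.support := by
    intro z hz
    exact (hmem z).1 (hspec ▸ Walk.subset_support_append_left _ _ hz)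
  have hsubB : ∀ z ∈ B.reverse.support, z ∈ w.support := by
    intro z hz
    rw [Walk.support_reverse, List.mem_reverse] at hz
    exact (hmem z).1 (hspec ▸ Walk.subset_support_append_right _ _ hz)
  have hcov : ∀ z ∈ w.support, z ∈ A.support ∨ z ∈ B.reverse.support := by
    intro z hz
    have : z ∈ (A.append B).support := hspec ▸ (hmem z).2 hz
    rw [Walk.mem_support_append_iff] at this
    rcases this with h | h
    · exact Or.inl h
    · right
      rw [Walk.support_reverse, List.mem_reverse]
      exact h
  exact ⟨A, B.reverse, ⟨hx, hy, hxy, hApath, hBpath.reverse, hinter, hedges⟩,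
    hlen, hsubA, hsubB, hcov⟩

/-- Any cycle has length at least the girth. -/
lemma aux_girth_le {l : ℕ} (hg : G.girth = 2 * l + 1) {u : V} (W : G.Walk u u)
    (hW : W.IsCycle) : 2 * l + 1 ≤ W.length := by
  have h1 : G.egirth ≤ (W.length : ℕ∞) := by
    rw [SimpleGraph.egirth]
    exact iInf_le_of_le u (iInf_le_of_le W (iInf_le_of_le hW le_rfl))
  have h2 : G.girth ≤ W.length := by
    have := ENat.toNat_le_toNat h1 (by simp)
    simpa [SimpleGraph.girth] using this
  omega

/-- A vertex outside an odd hole has at most one neighbour on the hole. -/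
lemma aux_unique_nbr [DecidableEq V] {l : ℕ} (hl : 4 ≤ l) (hG : MemGFam G l)
    {v : V} (w : G.Walk v v) (hw : IsOddHole G w) {z : V} (hz : z ∉ w.support)
    {a a' : V} (ha : a ∈ w.support) (ha' : a' ∈ w.support)
    (haz : G.Adj a z) (ha'z : G.Adj a' z) : a = a' := by
  by_contra hne
  obtain ⟨Q1, Q2, harc, hlen, hs1, hs2, -⟩ := aux_arcs_exist w hw.1.1 ha ha' hne
  have hwlen : w.length ≤ 2 * l + 1 := by
    obtain ⟨k, hk⟩ := hw.2
    have := hG.2 _ w hw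
    omega
  have key : ∀ (Q : G.Walk a a'), Q.IsPath → (∀ u ∈ Q.support, u ∈ w.support) →
      Q.length ≤ l → False := by
    intro Q hQp hQs hQl
    have hzQ : z ∉ Q.support := fun h => hz (hQs z h)
    have hWc : (Walk.cons haz.symm (Q.concat ha'z)).IsCycle := by
      rw [Walk.isCycle_def]
      refine ⟨?_, by simp, ?_⟩
      · rw [Walk.isTrail_def, Walk.edges_cons, Walk.edges_concat, List.concat_eq_append]
        refine List.nodup_cons.2 ⟨?_, ?_⟩
        · intro hmem
          rw [List.mem_append, List.mem_singleton] at hmem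
          rcases hmem with hmem | hmem
          · exact hzQ (Q.fst_mem_support_of_mem_edges hmem)
          · rw [Sym2.eq_iff] at hmem
            rcases hmem with ⟨h1, -⟩ | ⟨-, h2⟩
            · exact hz (h1 ▸ ha')
            · exact hne h2
        · rw [List.nodup_append]
          refine ⟨hQp.isTrail.edges_nodup, List.nodup_singleton _, ?_⟩
          intro e he b hb heq
          rw [List.mem_singleton] at hb
          subst hb
          exact hzQ (Q.snd_mem_support_of_mem_edges (heq ▸ he))
      · rw [Walk.support_cons, Walk.support_concat]
        simp only [List.tail_cons]
        rw [List.nodup_append]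
        exact ⟨hQp.support_nodup, List.nodup_singleton _,
          fun u hu b hb heq => by rw [List.mem_singleton] at hb; subst hb; exact hzQ (heq ▸ hu)⟩
    have hbig := aux_girth_le hG.1 _ hWc
    have hlenW : (Walk.cons haz.symm (Q.concat ha'z)).length = Q.length + 2 := by
      simp [Walk.length_cons, Walk.length_concat]
    omega
  rcases le_or_gt Q1.length l with hQ | hQ
  · exact key Q1 harc.2.2.2.1 hs1 hQ
  · exact key Q2 harc.2.2.2.2.1 hs2 (by omega)

/-- Build a short jump from a segment of `P` flanked by two nonadjacent
hole-vertices. -/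
lemma aux_build_short {v s t : V} {w : G.Walk v v} {P : G.Walk s t}
    (hjump : IsJump G w P)
    {b x' c c' : V} (Seg : G.Walk b x')
    (hdec : ∃ (A : G.Walk s b) (C : G.Walk x' t), P = A.append (Seg.append C))
    (hin : ∀ z ∈ Seg.support, z ∈ wInterior P)
    (hno : ∀ z ∈ Seg.support, ∀ a ∈ w.support, G.Adj a z →
      (z = b ∧ a = c) ∨ (z = x' ∧ a = c'))
    (hc : c ∈ w.support) (hc' : c' ∈ w.support)
    (hcb : G.Adj c b) (hc'x : G.Adj c' x')
    (hne : c ≠ c') (hnadj : ¬ G.Adj c c') :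
    ∃ (s' t' : V) (P' : G.Walk s' t'), IsShortJump G w P' ∧
      ∀ a ∈ P'.support, a ∈ w.support ∨ a ∈ P.support := by
  obtain ⟨hole, hsw, htw, hst, hnadjst, ⟨hPpath, hPind⟩, hintw⟩ := hjump
  obtain ⟨A, C, hPd⟩ := hdec
  have hSC : (Seg.append C).IsPath := by
    have h1 : (A.append (Seg.append C)).IsPath := hPd ▸ hPpath
    exact h1.of_append_right
  have hSegP : Seg.IsPath := hSC.of_append_left
  have hSegsub : ∀ z ∈ Seg.support, z ∈ P.support := by
    intro z hz
    rw [hPd, Walk.mem_support_append_iff, Walk.mem_support_append_iff]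
    exact Or.inr (Or.inl hz)
  have hSegw : ∀ z ∈ Seg.support, z ∉ w.support := fun z hz => hintw z (hin z hz)
  set P' : G.Walk c c' := Walk.cons hcb (Seg.concat hc'x.symm) with hP'
  have hsupp : P'.support = c :: (Seg.support ++ [c']) := by
    rw [hP', Walk.support_cons, Walk.support_concat]
  have hedgesP' : P'.edges = s(c, b) :: (Seg.edges ++ [s(x', c')]) := by
    rw [hP', Walk.edges_cons, Walk.edges_concat, List.concat_eq_append]
  have hmemP' : ∀ u, u ∈ P'.support ↔ u = c ∨ u ∈ Seg.support ∨ u = c' := by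
    intro u
    rw [hsupp]
    simp [List.mem_cons, List.mem_append]
  have hcSeg : c ∉ Seg.support := fun h => hSegw c h hc
  have hc'Seg : c' ∉ Seg.support := fun h => hSegw c' h hc'
  have hP'path : P'.IsPath := by
    rw [Walk.isPath_def, hsupp]
    refine List.nodup_cons.2 ⟨?_, List.nodup_append.2
      ⟨hSegP.support_nodup, List.nodup_singleton _, ?_⟩⟩
    · rw [List.mem_append, List.mem_singleton]
      rintro (h | rfl)
      · exact hcSeg h
      · exact hne rfl
    · intro u hu b hb heq
      rw [List.mem_singleton] at hb
      subst hb
      exact hc'Seg (heq ▸ hu)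
  have hP'ind : ∀ u ∈ P'.support, ∀ z ∈ P'.support, G.Adj u z → s(u, z) ∈ P'.edges := by
    intro u hu z hzm hadj
    rw [hmemP'] at hu hzm
    rw [hedgesP']
    rcases hu with rfl | hu | rfl
    · rcases hzm with rfl | hzm | rfl
      · exact absurd rfl hadj.ne
      · rcases hno z hzm _ hc hadj with ⟨rfl, -⟩ | ⟨rfl, h2⟩
        · exact List.mem_cons_self
        · exact absurd h2 hne
      · exact absurd hadj hnadj
    · rcases hzm with rfl | hzm | rfl
      · rcases hno u hu _ hc hadj.symm with ⟨rfl, -⟩ | ⟨rfl, h2⟩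
        · exact List.mem_cons.2 (Or.inl (Sym2.eq_swap))
        · exact absurd h2 hne
      · have := aux_middle_edge P hPpath A Seg C hPd hadj hu hzm
          (hPind u (hSegsub u hu) z (hSegsub z hzm) hadj)
        exact List.mem_cons.2 (Or.inr (List.mem_append_left _ this))
      · rcases hno u hu _ hc' hadj.symm with ⟨rfl, h2⟩ | ⟨rfl, -⟩
        · exact absurd h2.symm hne
        · exact List.mem_cons.2 (Or.inr (List.mem_append_right _ (by simp)))
    · rcases hzm with rfl | hzm | rfl
      · exact absurd hadj.symm hnadj
      · rcases hno z hzm _ hc' hadj with ⟨rfl, h2⟩ | ⟨rfl, -⟩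
        · exact absurd h2.symm hne
        · refine List.mem_cons.2 (Or.inr (List.mem_append_right _ ?_))
          rw [List.mem_singleton]
          exact Sym2.eq_swap
      · exact absurd rfl hadj.ne
  have hintP' : ∀ u ∈ wInterior P', u ∈ Seg.support := by
    intro u hu
    obtain ⟨hu1, hu2, hu3⟩ := hu
    rw [hmemP'] at hu1
    rcases hu1 with rfl | h | rfl
    · exact absurd rfl hu2
    · exact h
    · exact absurd rfl hu3
  refine ⟨c, c', P', ⟨⟨hole, hc, hc', hne, hnadj, ⟨hP'path, hP'ind⟩, ?_⟩, ?_⟩, ?_⟩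
  · intro u hu
    exact hSegw u (hintP' u hu)
  · intro a ha hac hac' z hzint hadj
    rcases hno z (hintP' z hzint) a ha hadj with ⟨-, rfl⟩ | ⟨-, rfl⟩
    · exact hac rfl
    · exact hac' rfl
  · intro u hu
    rw [hmemP'] at hu
    rcases hu with rfl | h | rfl
    · exact Or.inl hc
    · exact Or.inr (hSegsub u h)
    · exact Or.inl hc'

/-- The second vertex of `P` is not in the tail of a proper suffix of `P`. -/
lemma aux_p1_not_tail {s t p₁ b : V} (h₀ : G.Adj s p₁) (P₁ : G.Walk p₁ t)
    (hP : (Walk.cons h₀ P₁).IsPath)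
    (Pre : G.Walk s b) (R : G.Walk b t)
    (hdec : (Walk.cons h₀ P₁ : G.Walk s t) = Pre.append R)
    (hbs : b ≠ s) : p₁ ∉ R.support.tail := by
  have hp1Pre : p₁ ∈ Pre.support := by
    cases Pre with
    | nil => exact absurd rfl hbs
    | cons h' Pre' =>
      rename_i y
      have hy : s(s, y) ∈ (Walk.cons h₀ P₁).edges := by
        rw [hdec, Walk.edges_append]
        exact List.mem_append_left _ (by rw [Walk.edges_cons]; exact List.mem_cons_self)
      have : y = p₁ := aux_edge_head h₀ P₁ hP hy
      subst this
      rw [Walk.support_cons]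
      exact List.mem_cons.2 (Or.inr Pre'.start_mem_support)
  intro hmem
  have hnd := hP.support_nodup
  rw [hdec, Walk.support_append] at hnd
  exact (List.disjoint_of_nodup_append hnd) hp1Pre hmem

/-- A good chain cannot cross from the interior of one arc to the interior
of the other. -/
lemma aux_chain_no_cross {v s t : V} {w : G.Walk v v} (Q1 Q2 : G.Walk s t)
    (hole : IsHole G w)
    (hinter : ({a | a ∈ Q1.support} ∩ {a | a ∈ Q2.support} : Set V) = {s, t})
    (hedges : ({e | e ∈ w.edges} : Set (Sym2 V)) = {e | e ∈ Q1.edges} ∪ {e | e ∈ Q2.edges})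
    (hsub1 : ∀ z ∈ Q1.support, z ∈ w.support) (hsub2 : ∀ z ∈ Q2.support, z ∈ w.support)
    (hcov : ∀ z ∈ w.support, z ∈ Q1.support ∨ z ∈ Q2.support)
    {c0 a : V} (hc0 : c0 ∈ Q1.support) (hc0s : c0 ≠ s) (hc0t : c0 ≠ t)
    (ha : a ∈ Q2.support) (has : a ≠ s) (hat : a ≠ t)
    (hch : Relation.ReflTransGen
      (fun d d' => d ≠ t ∧ d' ∈ w.support ∧ d' ≠ s ∧ (d = d' ∨ G.Adj d d')) c0 a) :
    False := by
  have hint12 : ∀ z, z ∈ Q1.support → z ∈ Q2.support → z = s ∨ z = t := by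
    intro z h1 h2
    have hz : z ∈ ({s, t} : Set V) := hinter ▸ ⟨h1, h2⟩
    simpa using hz
  have hnadj : ∀ d d', d ∈ Q1.support → d ≠ s → d ≠ t → d' ∈ Q2.support → d' ≠ s → d' ≠ t →
      ¬ G.Adj d d' := by
    intro d d' hd hds hdt hd' hd's hd't hadj
    have he : s(d, d') ∈ ({e | e ∈ w.edges} : Set (Sym2 V)) :=
      hole.2.2 d (hsub1 d hd) d' (hsub2 d' hd') hadj
    rw [hedges] at he
    rcases he with he | he
    · have h2 : d' ∈ Q1.support := Q1.snd_mem_support_of_mem_edges he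
      rcases hint12 d' h2 hd' with rfl | rfl
      · exact hd's rfl
      · exact hd't rfl
    · have h2 : d ∈ Q2.support := Q2.fst_mem_support_of_mem_edges he
      rcases hint12 d hd h2 with rfl | rfl
      · exact hds rfl
      · exact hdt rfl
  have main : ∀ d, Relation.ReflTransGen
      (fun d d' => d ≠ t ∧ d' ∈ w.support ∧ d' ≠ s ∧ (d = d' ∨ G.Adj d d')) d a →
      ((d ∈ Q1.support ∧ d ≠ s ∧ d ≠ t) ∨ d = t) → False := by
    intro d hch'
    induction hch' using Relation.ReflTransGen.head_induction_on with
    | refl =>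
      rintro (⟨h1, h2, h3⟩ | rfl)
      · rcases hint12 a h1 ha with rfl | rfl
        · exact has rfl
        · exact hat rfl
      · exact hat rfl
    | head h' hrest ih =>
      rename_i d d''
      rintro (⟨hdQ1, hds, hdt⟩ | rfl)
      · obtain ⟨hdt', hd''w, hd''s, hgood⟩ := h'
        rcases hgood with rfl | hadj
        · exact ih (Or.inl ⟨hdQ1, hds, hdt⟩)
        · by_cases hd''t : d'' = t
          · exact ih (Or.inr hd''t)
          · rcases hcov d'' hd''w with h1 | h2
            · exact ih (Or.inl ⟨h1, hd''s, hd''t⟩)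
            · exact hnadj d d'' hdQ1 hds hdt h2 hd''s hd''t hadj
      · exact h'.1 rfl
  exact main c0 hch (Or.inl ⟨hc0, hc0s, hc0t⟩)

/-- Two vertices on a path can be ordered along it. -/
lemma aux_order_split [DecidableEq V] {s t b1 b2 : V} (P : G.Walk s t)
    (h1 : b1 ∈ P.support) (h2 : b2 ∈ P.support) :
    (∃ (Pre : G.Walk s b1) (R : G.Walk b1 t), P = Pre.append R ∧ b2 ∈ R.support) ∨
    (∃ (Pre : G.Walk s b2) (R : G.Walk b2 t), P = Pre.append R ∧ b1 ∈ R.support) := by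
  have hspec := P.take_spec h1
  by_cases hb2 : b2 ∈ (P.dropUntil b1 h1).support
  · exact Or.inl ⟨_, _, hspec.symm, hb2⟩
  · have hb2T : b2 ∈ (P.takeUntil b1 h1).support := by
      have h2' := h2
      rw [← hspec, Walk.mem_support_append_iff] at h2'
      tauto
    have hspec2 := (P.takeUntil b1 h1).take_spec hb2T
    refine Or.inr ⟨(P.takeUntil b1 h1).takeUntil b2 hb2T,
      ((P.takeUntil b1 h1).dropUntil b2 hb2T).append (P.dropUntil b1 h1), ?_, ?_⟩
    · rw [Walk.append_assoc, hspec2, hspec]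
    · rw [Walk.mem_support_append_iff]
      exact Or.inl ((P.takeUntil b1 h1).dropUntil b2 hb2T).end_mem_support

/-- `ArcsOf` is symmetric. -/
lemma aux_arcsOf_symm {v x y : V} {w : G.Walk v v} {Q1 Q2 : G.Walk x y}
    (h : ArcsOf G w Q1 Q2) : ArcsOf G w Q2 Q1 := by
  obtain ⟨h1, h2, h3, h4, h5, h6, h7⟩ := h
  exact ⟨h1, h2, h3, h5, h4, by rw [Set.inter_comm]; exact h6,
    by rw [Set.union_comm]; exact h7⟩

/-- The main recursion along the jump `P`: either a short jump appears, or
the hole-attachments of the rest of `P` are chained to `c` by good steps. -/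
lemma aux_rec_chain [DecidableEq V] {l : ℕ} (hl : 4 ≤ l) (hG : MemGFam G l)
    {v s t : V} {w : G.Walk v v} (hw : IsOddHole G w)
    {P : G.Walk s t} (hjump : IsJump G w P)
    {p₁ : V} (h₀ : G.Adj s p₁) (P₁ : G.Walk p₁ t) (hPP : P = Walk.cons h₀ P₁) :
    ∀ {x : V} (R : G.Walk x t) {b : V} (c : V) (Seg : G.Walk b x),
      (∃ Pre : G.Walk s b, P = Pre.append (Seg.append R)) →
      (∀ z ∈ Seg.support, z ∈ wInterior P) →
      (∀ z ∈ Seg.support, z ≠ b → ∀ a ∈ w.support, ¬ G.Adj a z) →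
      c ∈ w.support → G.Adj c b →
      p₁ ∉ R.support.tail →
      (c = t → R.length = 1) →
      (∃ (s' t' : V) (P' : G.Walk s' t'), IsShortJump G w P' ∧
        ∀ a ∈ P'.support, a ∈ w.support ∨ a ∈ P.support) ∨
      (∀ z ∈ R.support, z ∈ wInterior P → ∀ a ∈ w.support, G.Adj a z →
        Relation.ReflTransGen
          (fun d d' => d ≠ t ∧ d' ∈ w.support ∧ d' ≠ s ∧ (d = d' ∨ G.Adj d d')) c a) := by
  obtain ⟨hole, hsw, htw, hst, hnadjst, ⟨hPpath, hPind⟩, hintw⟩ := hjump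
  have hjump' : IsJump G w P := ⟨hole, hsw, htw, hst, hnadjst, ⟨hPpath, hPind⟩, hintw⟩
  have FU : ∀ z, z ∈ wInterior P → ∀ a, a ∈ w.support → ∀ a', a' ∈ w.support →
      G.Adj a z → G.Adj a' z → a = a' := by
    intro z hz a haw a' ha'w hh1 hh2
    exact aux_unique_nbr hl hG w hw (hintw z hz) haw ha'w hh1 hh2
  suffices H : ∀ (n : ℕ) {x : V} (R : G.Walk x t), R.length ≤ n →
      ∀ {b : V} (c : V) (Seg : G.Walk b x),
      (∃ Pre : G.Walk s b, P = Pre.append (Seg.append R)) →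
      (∀ z ∈ Seg.support, z ∈ wInterior P) →
      (∀ z ∈ Seg.support, z ≠ b → ∀ a ∈ w.support, ¬ G.Adj a z) →
      c ∈ w.support → G.Adj c b →
      p₁ ∉ R.support.tail →
      (c = t → R.length = 1) →
      (∃ (s' t' : V) (P' : G.Walk s' t'), IsShortJump G w P' ∧
        ∀ a ∈ P'.support, a ∈ w.support ∨ a ∈ P.support) ∨
      (∀ z ∈ R.support, z ∈ wInterior P → ∀ a ∈ w.support, G.Adj a z →
        Relation.ReflTransGen
          (fun d d' => d ≠ t ∧ d' ∈ w.support ∧ d' ≠ s ∧ (d = d' ∨ G.Adj d d')) c a) by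
    intro x R b c Seg
    exact H R.length R le_rfl c Seg
  intro n
  induction n with
  | zero =>
    intro x R hlen b c Seg hdec hin hno hcw hcb hp1 hct
    exfalso
    cases R with
    | nil =>
      have ht' : t ∈ wInterior P := hin t Seg.end_mem_support
      exact ht'.2.2 rfl
    | cons hadj R' => simp [Walk.length_cons] at hlen
  | succ n ihn =>
    intro x R hlen b c Seg hdec hin hno hcw hcb hp1 hct
    cases R with
    | nil =>
      exfalso
      have ht' : t ∈ wInterior P := hin t Seg.end_mem_support
      exact ht'.2.2 rfl
    | cons hadj R' =>
      rename_i x₂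
      obtain ⟨Pre, hdec⟩ := hdec
      have hnd : P.support.Nodup := hPpath.support_nodup
      have hPsupp : P.support =
          Pre.support ++ (Seg.support.tail ++ (Walk.cons hadj R').support.tail) := by
        rw [hdec, Walk.support_append, Walk.tail_support_append]
      have hndP : (Pre.support ++
          (Seg.support.tail ++ (Walk.cons hadj R').support.tail)).Nodup := hPsupp ▸ hnd
      have hdisjP := List.disjoint_of_nodup_append hndP
      have hSR : (Seg.append (Walk.cons hadj R')).IsPath := by
        have h1 : (Pre.append (Seg.append (Walk.cons hadj R'))).IsPath := hdec ▸ hPpath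
        exact h1.of_append_right
      have hRpath : (Walk.cons hadj R').IsPath := hSR.of_append_right
      have hR'path : R'.IsPath := hRpath.of_cons
      have hxSeg : x ∈ Seg.support := Seg.end_mem_support
      have Hx : ∀ a, a ∈ w.support → G.Adj a x →
          Relation.ReflTransGen
            (fun d d' => d ≠ t ∧ d' ∈ w.support ∧ d' ≠ s ∧ (d = d' ∨ G.Adj d d')) c a := by
        intro a haw hax
        rcases eq_or_ne x b with rfl | hxb
        · have hac : a = c := FU x (hin x hxSeg) a haw c hcw hax hcb
          exact hac ▸ Relation.ReflTransGen.refl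
        · exact absurd hax (hno x hxSeg hxb a haw)
      cases R' with
      | nil =>
        right
        intro z hz hzint a haw hadj'
        rw [Walk.support_cons] at hz
        rcases List.mem_cons.1 hz with rfl | hz
        · exact Hx a haw hadj'
        · rw [Walk.support_nil, List.mem_singleton] at hz
          exact absurd hz hzint.2.2
      | cons hadj₂ R'' =>
        have hx₂t : x₂ ≠ t := by
          rintro rfl
          have hnd' := hR'path.support_nodup
          rw [Walk.support_cons, List.nodup_cons] at hnd'
          exact hnd'.1 R''.end_mem_support
        have hx₂tail : x₂ ∈ (Walk.cons hadj (Walk.cons hadj₂ R'')).support.tail := by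
          rw [Walk.support_cons, List.tail_cons]
          exact Walk.start_mem_support _
        have hx₂P : x₂ ∈ P.support := by
          rw [hdec, Walk.mem_support_append_iff, Walk.mem_support_append_iff]
          right; right
          rw [Walk.support_cons]
          exact List.mem_cons.2 (Or.inr (Walk.start_mem_support _))
        have hx₂s : x₂ ≠ s := by
          rintro rfl
          exact hdisjP Pre.start_mem_support (List.mem_append_right _ hx₂tail)
        have hx₂int : x₂ ∈ wInterior P := ⟨hx₂P, hx₂s, hx₂t⟩
        have hx₂p₁ : x₂ ≠ p₁ := by
          rintro rfl
          apply hp1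
          rw [Walk.support_cons, List.tail_cons]
          exact Walk.start_mem_support _
        have hc_ne_t : c ≠ t := by
          intro hcteq
          have := hct hcteq
          simp [Walk.length_cons] at this
        have happ : Seg.append (Walk.cons hadj (Walk.cons hadj₂ R'')) =
            (Seg.concat hadj).append (Walk.cons hadj₂ R'') := by
          rw [Walk.concat_eq_append, ← Walk.append_assoc, Walk.cons_nil_append]
        have hp1' : p₁ ∉ (Walk.cons hadj₂ R'').support.tail := by
          intro hmm
          apply hp1
          rw [Walk.support_cons, List.tail_cons]
          exact List.tail_subset _ hmm
        have hlen' : (Walk.cons hadj₂ R'').length ≤ n := by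
          rw [Walk.length_cons] at hlen
          omega
        by_cases hatt : ∃ a, a ∈ w.support ∧ G.Adj a x₂
        · obtain ⟨c', hc'w, hc'adj⟩ := hatt
          have hc's : c' ≠ s := by
            intro hc'eq
            have hedge : s(s, x₂) ∈ P.edges :=
              hPind s P.start_mem_support x₂ hx₂P (hc'eq ▸ hc'adj)
            rw [hPP] at hedge
            have hPPpath : (Walk.cons h₀ P₁).IsPath := hPP ▸ hPpath
            exact hx₂p₁ (aux_edge_head h₀ P₁ hPPpath hedge)
          by_cases hgood : c = c' ∨ G.Adj c c'
          · have hdec' : ∃ Pre' : G.Walk s x₂,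
                P = Pre'.append ((Walk.nil : G.Walk x₂ x₂).append (Walk.cons hadj₂ R'')) := by
              refine ⟨Pre.append (Seg.concat hadj), ?_⟩
              rw [Walk.nil_append, hdec, happ, Walk.append_assoc]
            have hct' : c' = t → (Walk.cons hadj₂ R'').length = 1 := by
              intro hc'eq
              have hedge : s(x₂, t) ∈ P.edges :=
                hPind x₂ hx₂P t P.end_mem_support (hc'eq ▸ hc'adj).symm
              refine aux_suffix_len_one P hPpath (Pre.append (Seg.concat hadj))
                (Walk.cons hadj₂ R'') ?_ hedge hx₂t
              rw [hdec, happ, Walk.append_assoc]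
            have hres := ihn (Walk.cons hadj₂ R'') hlen' c' (Walk.nil : G.Walk x₂ x₂)
              hdec'
              (by intro z hz; rw [Walk.support_nil, List.mem_singleton] at hz;
                  subst hz; exact hx₂int)
              (by intro z hz hzb; rw [Walk.support_nil, List.mem_singleton] at hz;
                  exact absurd hz hzb)
              hc'w hc'adj hp1' hct'
            rcases hres with hshort | hchain
            · exact Or.inl hshort
            · right
              intro z hz hzint a haw hadj'
              rw [Walk.support_cons] at hz
              rcases List.mem_cons.1 hz with rfl | hz
              · exact Hx a haw hadj'
              · exact Relation.ReflTransGen.head ⟨hc_ne_t, hc'w, hc's, hgood⟩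
                  (hchain z hz hzint a haw hadj')
          · rw [not_or] at hgood
            left
            refine aux_build_short hjump' (Seg.concat hadj)
              ⟨Pre, Walk.cons hadj₂ R'', by rw [hdec, happ]⟩ ?_ ?_
              hcw hc'w hcb hc'adj hgood.1 hgood.2
            · intro z hz
              rw [Walk.support_concat, List.mem_append] at hz
              rcases hz with hz | hz
              · exact hin z hz
              · rw [List.mem_singleton] at hz
                subst hz
                exact hx₂int
            · intro z hz a haw hadj'
              rw [Walk.support_concat, List.mem_append] at hz
              rcases hz with hz | hz
              · rcases eq_or_ne z b with rfl | hzb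
                · exact Or.inl ⟨rfl, FU z (hin z hz) a haw c hcw hadj' hcb⟩
                · exact absurd hadj' (hno z hz hzb a haw)
              · rw [List.mem_singleton] at hz
                subst hz
                exact Or.inr ⟨rfl, FU z hx₂int a haw c' hc'w hadj' hc'adj⟩
        · have hdec' : ∃ Pre' : G.Walk s b,
              P = Pre'.append ((Seg.concat hadj).append (Walk.cons hadj₂ R'')) := by
            exact ⟨Pre, by rw [hdec, happ]⟩
          have hres := ihn (Walk.cons hadj₂ R'') hlen' c (Seg.concat hadj)
            hdec'
            (by intro z hz;
                rw [Walk.support_concat, List.mem_append] at hz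
                rcases hz with hz | hz
                · exact hin z hz
                · rw [List.mem_singleton] at hz; subst hz; exact hx₂int)
            (by intro z hz hzb a haw
                rw [Walk.support_concat, List.mem_append] at hz
                rcases hz with hz | hz
                · exact hno z hz hzb a haw
                · rw [List.mem_singleton] at hz; subst hz
                  exact fun hadj' => hatt ⟨a, haw, hadj'⟩)
            hcw hcb hp1'
            (fun hcteq => absurd hcteq hc_ne_t)
          rcases hres with hshort | hchain
          · exact Or.inl hshort
          · right
            intro z hz hzint a haw hadj'
            rw [Walk.support_cons] at hz
            rcases List.mem_cons.1 hz with rfl | hz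
            · exact Hx a haw hadj'
            · exact hchain z hz hzint a haw hadj'

/-- If there are attachments in the interiors of both arcs, a short jump exists. -/
lemma aux_cross [DecidableEq V] {l : ℕ} (hl : 4 ≤ l) (hG : MemGFam G l)
    {v s t : V} {w : G.Walk v v} (hw : IsOddHole G w)
    {P : G.Walk s t} (hjump : IsJump G w P)
    {p₁ : V} (h₀ : G.Adj s p₁) (P₁ : G.Walk p₁ t) (hPP : P = Walk.cons h₀ P₁)
    (Q1 Q2 : G.Walk s t)
    (hinter : ({a | a ∈ Q1.support} ∩ {a | a ∈ Q2.support} : Set V) = {s, t})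
    (hedgesQ : ({e | e ∈ w.edges} : Set (Sym2 V)) = {e | e ∈ Q1.edges} ∪ {e | e ∈ Q2.edges})
    (hsub1 : ∀ z ∈ Q1.support, z ∈ w.support) (hsub2 : ∀ z ∈ Q2.support, z ∈ w.support)
    (hcov : ∀ z ∈ w.support, z ∈ Q1.support ∨ z ∈ Q2.support)
    {b1 c1 b2 c2 : V}
    (hb1 : b1 ∈ wInterior P) (hb2 : b2 ∈ wInterior P)
    (hc1Q : c1 ∈ Q1.support) (hc1s : c1 ≠ s) (hc1t : c1 ≠ t)
    (hc1w : c1 ∈ w.support) (hadj1 : G.Adj c1 b1)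
    (hc2Q : c2 ∈ Q2.support) (hc2s : c2 ≠ s) (hc2t : c2 ≠ t)
    (hc2w : c2 ∈ w.support) (hadj2 : G.Adj c2 b2) :
    ∃ (s' t' : V) (P' : G.Walk s' t'), IsShortJump G w P' ∧
      ∀ a ∈ P'.support, a ∈ w.support ∨ a ∈ P.support := by
  have hPpath : P.IsPath := hjump.2.2.2.2.2.1.1
  have run : ∀ (QA QB : G.Walk s t),
      ({a | a ∈ QA.support} ∩ {a | a ∈ QB.support} : Set V) = {s, t} →
      ({e | e ∈ w.edges} : Set (Sym2 V)) = {e | e ∈ QA.edges} ∪ {e | e ∈ QB.edges} →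
      (∀ z ∈ QA.support, z ∈ w.support) → (∀ z ∈ QB.support, z ∈ w.support) →
      (∀ z ∈ w.support, z ∈ QA.support ∨ z ∈ QB.support) →
      ∀ {d1 e1 d2 e2 : V}, d1 ∈ wInterior P → d2 ∈ wInterior P →
      e1 ∈ QA.support → e1 ≠ s → e1 ≠ t → e1 ∈ w.support → G.Adj e1 d1 →
      e2 ∈ QB.support → e2 ≠ s → e2 ≠ t → e2 ∈ w.support → G.Adj e2 d2 →
      (∃ (Pre : G.Walk s d1) (R : G.Walk d1 t), P = Pre.append R ∧ d2 ∈ R.support) →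
      (∃ (s' t' : V) (P' : G.Walk s' t'), IsShortJump G w P' ∧
        ∀ a ∈ P'.support, a ∈ w.support ∨ a ∈ P.support) := by
    intro QA QB hI hE hA hB hC d1 e1 d2 e2 hd1 hd2 he1Q he1s he1t he1w hadjA
      he2Q he2s he2t he2w hadjB hdec
    obtain ⟨Pre, R, hPdec, hd2R⟩ := hdec
    have hp1R : p₁ ∉ R.support.tail := by
      refine aux_p1_not_tail h₀ P₁ (hPP ▸ hPpath) Pre R ?_ hd1.2.1
      rw [← hPP]
      exact hPdec
    have hrec := aux_rec_chain hl hG hw hjump h₀ P₁ hPP R e1 (Walk.nil : G.Walk d1 d1)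
      ⟨Pre, by rw [Walk.nil_append]; exact hPdec⟩
      (by intro z hz; rw [Walk.support_nil, List.mem_singleton] at hz; subst hz; exact hd1)
      (by intro z hz hzb; rw [Walk.support_nil, List.mem_singleton] at hz;
          exact absurd hz hzb)
      he1w hadjA hp1R (fun h => absurd h he1t)
    rcases hrec with hshort | hchain
    · exact hshort
    · exfalso
      exact aux_chain_no_cross QA QB hjump.1 hI hE hA hB hC he1Q he1s he1t he2Q he2s he2t
        (hchain d2 hd2R hd2 e2 he2w hadjB)
  have hb12 : b1 ≠ b2 := by
    rintro rfl
    have : c1 = c2 := aux_unique_nbr hl hG w hw (hjump.2.2.2.2.2.2 b1 hb1)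
      hc1w hc2w hadj1 hadj2
    subst this
    have hc12 : c1 ∈ ({s, t} : Set V) := hinter ▸ ⟨hc1Q, hc2Q⟩
    rcases hc12 with rfl | h
    · exact hc1s rfl
    · exact hc1t h
  rcases aux_order_split P hb1.1 hb2.1 with hsplit | hsplit
  · exact run Q1 Q2 hinter hedgesQ hsub1 hsub2 hcov hb1 hb2
      hc1Q hc1s hc1t hc1w hadj1 hc2Q hc2s hc2t hc2w hadj2 hsplit
  · refine run Q2 Q1 (by rw [Set.inter_comm]; exact hinter)
      (by rw [Set.union_comm]; exact hedgesQ) hsub2 hsub1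
      (fun z hz => (hcov z hz).symm) hb2 hb1
      hc2Q hc2s hc2t hc2w hadj2 hc1Q hc1s hc1t hc1w hadj1 hsplit

end Aux

/-- If a jump `P` over the odd hole `w` is not local, then
`G[V(C ∪ P)]` contains a short jump over `w`. -/
theorem nonlocal_jump_gives_short_jump {V : Type*} [Fintype V]
    (l : ℕ) (hl : 4 ≤ l) (G : SimpleGraph V) (hG : MemGFam G l)
    {v s t : V} (w : G.Walk v v) (hw : IsOddHole G w)
    (P : G.Walk s t) (hjump : IsJump G w P) (hnl : ¬ IsLocalJump G w P) :
    ∃ (s' t' : V) (P' : G.Walk s' t'), IsShortJump G w P' ∧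
      ∀ a ∈ P'.support, a ∈ w.support ∨ a ∈ P.support := by
  classical
  by_cases hA : ∀ a ∈ w.support, a ≠ s → a ≠ t → ∀ b ∈ wInterior P, ¬ G.Adj a b
  · exact ⟨s, t, P, ⟨hjump, hA⟩, fun a ha => Or.inr ha⟩
  · push_neg at hA
    obtain ⟨a0, ha0w, ha0s, ha0t, z0, hz0, hadj0⟩ := hA
    cases P with
    | nil => exact absurd rfl hjump.2.2.2.1
    | cons h₀ P₁ =>
      obtain ⟨Q1, Q2, harc, hlen, hs1, hs2, hcov⟩ :=
        aux_arcs_exist w hw.1.1 hjump.2.1 hjump.2.2.1 hjump.2.2.2.1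
      have endg : ∀ (QA QB : G.Walk s t), ArcsOf G w QA QB →
          (∀ z ∈ QA.support, z ∈ w.support) → (∀ z ∈ QB.support, z ∈ w.support) →
          (∀ z ∈ w.support, z ∈ QA.support ∨ z ∈ QB.support) →
          a0 ∈ QA.support →
          ∃ (s' t' : V) (P' : G.Walk s' t'), IsShortJump G w P' ∧
            ∀ a ∈ P'.support, a ∈ w.support ∨ a ∈ (Walk.cons h₀ P₁).support := by
        intro QA QB harc' hsA hsB hcov' ha0Q
        by_cases hopp : ∃ a2 z2, a2 ∈ QB.support ∧ a2 ≠ s ∧ a2 ≠ t ∧ a2 ∈ w.support ∧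
            z2 ∈ wInterior (Walk.cons h₀ P₁) ∧ G.Adj a2 z2
        · obtain ⟨a2, z2, h1, h2, h3, h4, h5, h6⟩ := hopp
          exact aux_cross hl hG hw hjump h₀ P₁ rfl QA QB harc'.2.2.2.2.2.1
            harc'.2.2.2.2.2.2 hsA hsB hcov' hz0 h5 ha0Q ha0s ha0t ha0w hadj0
            h1 h2 h3 h4 h6
        · exfalso
          apply hnl
          refine ⟨QA, QB, hjump, harc', ⟨a0, ⟨ha0Q, ha0s, ha0t⟩, z0, hz0, hadj0⟩, ?_⟩
          intro a' ha' z' hz' hadj'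
          obtain ⟨ham, has', hat'⟩ := ha'
          exact hopp ⟨a', z', ham, has', hat', hsB a' ham, hz', hadj'⟩
      rcases hcov a0 ha0w with h | h
      · exact endg Q1 Q2 harc hs1 hs2 hcov h
      · exact endg Q2 Q1 (aux_arcsOf_symm harc) hs2 hs1 (fun z hz => (hcov z hz).symm) h
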